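/- Let (V, g, I, J, K) be a hyper-Kähler vector space of real dimension 2n (n ≥ 1) with associated Kähler forms ω_I, ω_J, ω_K. Then for every w ∈ V*, the identity ω_I^{n−1} ∧ (w∘K) = ω_J^{n−1} ∧ w holds in ⋀^{2n−1}V*, where w∘K ∈ V* is the precomposition of w with K. -/

import Mathlib

set_option synthInstance.maxHeartbeats 1000000
set_option maxHeartbeats 1000000
set_option linter.unusedSectionVars false
open ExteriorAlgebra
open scoped TensorProduct

/-- The element of `⋀² V*` (inside the exterior algebra of the dual space) corresponding to
a bilinear form `B` on `V` (given as a linear map `V →ₗ V*`): in terms of a basis `(eᵢ)`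
with dual basis `(eⁱ)`, it is `∑_{i<j} B(eᵢ,eⱼ) eⁱ ∧ eʲ = ½ ∑_{i,j} B(eᵢ,eⱼ) eⁱ ∧ eʲ`. -/
noncomputable def extOfForm {V : Type} [AddCommGroup V] [Module ℝ V] [FiniteDimensional ℝ V]
    (B : V →ₗ[ℝ] Module.Dual ℝ V) : ExteriorAlgebra ℝ (Module.Dual ℝ V) :=
  (2⁻¹ : ℝ) • TensorProduct.lift
    (((LinearMap.mul ℝ (ExteriorAlgebra ℝ (Module.Dual ℝ V))).compl₂
        (ExteriorAlgebra.ι ℝ)) ∘ₗ (ExteriorAlgebra.ι ℝ))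
    ((dualTensorHomEquiv ℝ V (Module.Dual ℝ V)).symm B)

variable {V : Type} [AddCommGroup V] [Module ℝ V] [FiniteDimensional ℝ V]

noncomputable def extAux : (Module.Dual ℝ V) ⊗[ℝ] (Module.Dual ℝ V) →ₗ[ℝ]
    ExteriorAlgebra ℝ (Module.Dual ℝ V) :=
  TensorProduct.lift
    (((LinearMap.mul ℝ (ExteriorAlgebra ℝ (Module.Dual ℝ V))).compl₂
        (ExteriorAlgebra.ι ℝ)) ∘ₗ (ExteriorAlgebra.ι ℝ))

@[simp] lemma extAux_tmul (a b : Module.Dual ℝ V) :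
    extAux (a ⊗ₜ[ℝ] b) = ExteriorAlgebra.ι ℝ a * ExteriorAlgebra.ι ℝ b := rfl

lemma extOfForm_eq (B : V →ₗ[ℝ] Module.Dual ℝ V) :
    extOfForm B = (2⁻¹ : ℝ) • extAux ((dualTensorHomEquiv ℝ V (Module.Dual ℝ V)).symm B) := rfl

lemma dth_symm_apply (B : V →ₗ[ℝ] Module.Dual ℝ V) :
    dualTensorHom ℝ V (Module.Dual ℝ V) ((dualTensorHomEquiv ℝ V (Module.Dual ℝ V)).symm B) = B := by
  have h : (dualTensorHomEquiv ℝ V (Module.Dual ℝ V)) =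
      dualTensorHomEquivOfBasis (Module.Free.chooseBasis ℝ V) :=
      dualTensorHomEquiv_eq_dualTensorHomEquivOfBasis _
  rw [h]
  exact dualTensorHomEquivOfBasis_symm_cancel_right _ _

/-- contraction operator -/
noncomputable def ctr (v : V) :
    ExteriorAlgebra ℝ (Module.Dual ℝ V) →ₗ[ℝ] ExteriorAlgebra ℝ (Module.Dual ℝ V) :=
  CliffordAlgebra.contractLeft (Module.Dual.eval ℝ V v)

lemma ctr_ι (v : V) (a : Module.Dual ℝ V) :
    ctr v (ExteriorAlgebra.ι ℝ a) = algebraMap ℝ _ (a v) := by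
  exact CliffordAlgebra.contractLeft_ι _ _ _

lemma ctr_ι_mul (v : V) (a : Module.Dual ℝ V) (x : ExteriorAlgebra ℝ (Module.Dual ℝ V)) :
    ctr v (ExteriorAlgebra.ι ℝ a * x) = a v • x - ExteriorAlgebra.ι ℝ a * ctr v x := by
  exact CliffordAlgebra.contractLeft_ι_mul (Q := (0 : QuadraticForm ℝ (Module.Dual ℝ V))) (d := Module.Dual.eval ℝ V v) a x

lemma ctr_two (v : V) (a b : Module.Dual ℝ V) :
    ctr v (ExteriorAlgebra.ι ℝ a * ExteriorAlgebra.ι ℝ b)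
      = a v • ExteriorAlgebra.ι ℝ b - b v • ExteriorAlgebra.ι ℝ a := by
  rw [ctr_ι_mul, ctr_ι, ← Algebra.commutes, ← Algebra.smul_def]

lemma ctr_extAux (v : V) (t : (Module.Dual ℝ V) ⊗[ℝ] (Module.Dual ℝ V)) :
    ctr v (extAux t)
      = ExteriorAlgebra.ι ℝ ((dualTensorHom ℝ V (Module.Dual ℝ V) t) v)
        - ExteriorAlgebra.ι ℝ ((dualTensorHom ℝ V (Module.Dual ℝ V) t).flip v) := by
  induction t using TensorProduct.induction_on with
  | zero =>
      have h0 : (LinearMap.flip (0 : V →ₗ[ℝ] Module.Dual ℝ V)) v = 0 := by ext x; rfl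
      simp [h0]
  | tmul a b =>
      rw [extAux_tmul, ctr_two]
      have h1 : (dualTensorHom ℝ V (Module.Dual ℝ V) (a ⊗ₜ[ℝ] b)) v = a v • b := by
        simp
      have h2 : (dualTensorHom ℝ V (Module.Dual ℝ V) (a ⊗ₜ[ℝ] b)).flip v = b v • a := by
        ext x; simp [mul_comm]
      rw [h1, h2, map_smul, map_smul]
  | add t1 t2 h1 h2 =>
      rw [map_add, map_add, h1, h2, map_add]
      have h3 : ((dualTensorHom ℝ V (Module.Dual ℝ V)) t1
            + (dualTensorHom ℝ V (Module.Dual ℝ V)) t2).flip v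
          = ((dualTensorHom ℝ V (Module.Dual ℝ V)) t1).flip v
            + ((dualTensorHom ℝ V (Module.Dual ℝ V)) t2).flip v := by ext x; rfl
      simp only [LinearMap.add_apply, h3, map_add]
      abel

lemma ι_mul_ι_comm (x y c : Module.Dual ℝ V) :
    (ExteriorAlgebra.ι ℝ x * ExteriorAlgebra.ι ℝ y) * ExteriorAlgebra.ι ℝ c
      = ExteriorAlgebra.ι ℝ c * (ExteriorAlgebra.ι ℝ x * ExteriorAlgebra.ι ℝ y) := by
  have h1 : ∀ p q : Module.Dual ℝ V,
      ExteriorAlgebra.ι ℝ p * ExteriorAlgebra.ι ℝ q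
        = -(ExteriorAlgebra.ι ℝ q * ExteriorAlgebra.ι ℝ p) := fun p q =>
    eq_neg_of_add_eq_zero_left (ExteriorAlgebra.ι_add_mul_swap p q)
  calc (ExteriorAlgebra.ι ℝ x * ExteriorAlgebra.ι ℝ y) * ExteriorAlgebra.ι ℝ c
      = ExteriorAlgebra.ι ℝ x * (ExteriorAlgebra.ι ℝ y * ExteriorAlgebra.ι ℝ c) := mul_assoc _ _ _
    _ = ExteriorAlgebra.ι ℝ x * -(ExteriorAlgebra.ι ℝ c * ExteriorAlgebra.ι ℝ y) := by rw [h1 y c]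
    _ = -(ExteriorAlgebra.ι ℝ x * ExteriorAlgebra.ι ℝ c) * ExteriorAlgebra.ι ℝ y := by
        rw [mul_neg, neg_mul, mul_assoc]
    _ = (ExteriorAlgebra.ι ℝ c * ExteriorAlgebra.ι ℝ x) * ExteriorAlgebra.ι ℝ y := by
        rw [h1 x c, neg_neg]
    _ = ExteriorAlgebra.ι ℝ c * (ExteriorAlgebra.ι ℝ x * ExteriorAlgebra.ι ℝ y) := mul_assoc _ _ _

lemma extAux_comm_ι (t : (Module.Dual ℝ V) ⊗[ℝ] (Module.Dual ℝ V)) (c : Module.Dual ℝ V) :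
    Commute (extAux t) (ExteriorAlgebra.ι ℝ c) := by
  induction t using TensorProduct.induction_on with
  | zero => rw [map_zero]; exact Commute.zero_left _
  | tmul a b => exact (ι_mul_ι_comm a b c)
  | add t1 t2 h1 h2 => rw [map_add]; exact h1.add_left h2

lemma ctr_extAux_mul (v : V) (t : (Module.Dual ℝ V) ⊗[ℝ] (Module.Dual ℝ V))
    (x : ExteriorAlgebra ℝ (Module.Dual ℝ V)) :
    ctr v (extAux t * x) = ctr v (extAux t) * x + extAux t * ctr v x := by
  induction t using TensorProduct.induction_on with
  | zero => simp
  | tmul a b =>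
      rw [extAux_tmul, ctr_two, mul_assoc, ctr_ι_mul, ctr_ι_mul]
      simp only [mul_sub, sub_mul, smul_mul_assoc, mul_smul_comm, mul_assoc]
      abel
  | add t1 t2 h1 h2 =>
      rw [map_add, add_mul, map_add, map_add, h1, h2, add_mul, add_mul]
      abel

lemma extOfForm_comm_ι (B : V →ₗ[ℝ] Module.Dual ℝ V) (c : Module.Dual ℝ V) :
    Commute (extOfForm B) (ExteriorAlgebra.ι ℝ c) := by
  rw [extOfForm_eq]
  exact (extAux_comm_ι _ c).smul_left _

lemma ctr_extOfForm (v : V) (B : V →ₗ[ℝ] Module.Dual ℝ V)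
    (hanti : ∀ x y : V, B x y = - (B y x)) :
    ctr v (extOfForm B) = ExteriorAlgebra.ι ℝ (B v) := by
  rw [extOfForm_eq, map_smul, ctr_extAux, dth_symm_apply]
  have hflip : B.flip v = -(B v) := by
    ext x
    simp only [LinearMap.flip_apply, LinearMap.neg_apply]
    exact hanti x v
  rw [hflip, map_neg, sub_neg_eq_add]
  rw [← two_smul ℝ (ExteriorAlgebra.ι ℝ (B v)), smul_smul]
  norm_num

lemma ctr_extOfForm_mul (v : V) (B : V →ₗ[ℝ] Module.Dual ℝ V)
    (x : ExteriorAlgebra ℝ (Module.Dual ℝ V)) :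
    ctr v (extOfForm B * x) = ctr v (extOfForm B) * x + extOfForm B * ctr v x := by
  rw [extOfForm_eq, smul_mul_assoc, map_smul, map_smul, ctr_extAux_mul, smul_add,
    smul_mul_assoc, smul_mul_assoc]

lemma ctr_extOfForm_pow (v : V) (B : V →ₗ[ℝ] Module.Dual ℝ V)
    (hanti : ∀ x y : V, B x y = - (B y x)) :
    ∀ k : ℕ, ctr v (extOfForm B ^ (k + 1))
      = (k + 1) • (extOfForm B ^ k * ExteriorAlgebra.ι ℝ (B v)) := by
  intro k
  induction k with
  | zero => simp [ctr_extOfForm v B hanti]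
  | succ k ih =>
      rw [pow_succ' (extOfForm B) (k+1), ctr_extOfForm_mul, ih, ctr_extOfForm v B hanti]
      have hcomm : ExteriorAlgebra.ι ℝ (B v) * extOfForm B ^ (k + 1)
          = extOfForm B ^ (k + 1) * ExteriorAlgebra.ι ℝ (B v) :=
        (((extOfForm_comm_ι B (B v)).pow_left (k+1)).eq).symm
      rw [hcomm, mul_smul_comm, ← mul_assoc, ← pow_succ' (extOfForm B) k, succ_nsmul,
        add_smul, add_comm, succ_nsmul, one_smul]

lemma map_extAux (f : Module.Dual ℝ V →ₗ[ℝ] Module.Dual ℝ V)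
    (t : (Module.Dual ℝ V) ⊗[ℝ] (Module.Dual ℝ V)) :
    ExteriorAlgebra.map f (extAux t) = extAux (TensorProduct.map f f t) := by
  induction t using TensorProduct.induction_on with
  | zero => simp
  | tmul a b => simp [TensorProduct.map_tmul]
  | add t1 t2 h1 h2 => simp [map_add, h1, h2]

lemma dth_map (T : V →ₗ[ℝ] V) (t : (Module.Dual ℝ V) ⊗[ℝ] (Module.Dual ℝ V)) :
    dualTensorHom ℝ V (Module.Dual ℝ V) (TensorProduct.map T.dualMap T.dualMap t)
      = T.dualMap ∘ₗ (dualTensorHom ℝ V (Module.Dual ℝ V) t) ∘ₗ T := by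
  induction t using TensorProduct.induction_on with
  | zero => simp
  | tmul a b =>
      ext v x
      simp [TensorProduct.map_tmul, LinearMap.dualMap_apply]
  | add t1 t2 h1 h2 => simp [map_add, h1, h2]; ext v x; simp

lemma map_extOfForm (T : V →ₗ[ℝ] V) (B : V →ₗ[ℝ] Module.Dual ℝ V) :
    ExteriorAlgebra.map T.dualMap (extOfForm B) = extOfForm (T.dualMap ∘ₗ B ∘ₗ T) := by
  rw [extOfForm_eq, extOfForm_eq, map_smul, map_extAux]
  congr 1
  congr 1
  rw [LinearEquiv.eq_symm_apply]
  have h : (dualTensorHomEquiv ℝ V (Module.Dual ℝ V)) =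
      dualTensorHomEquivOfBasis (Module.Free.chooseBasis ℝ V) :=
      dualTensorHomEquiv_eq_dualTensorHomEquivOfBasis _
  rw [h, dualTensorHomEquivOfBasis_apply, dth_map, ← h, dth_symm_apply]

lemma extOfForm_smul (c : ℝ) (B : V →ₗ[ℝ] Module.Dual ℝ V) :
    extOfForm (c • B) = c • extOfForm B := by
  rw [extOfForm_eq, extOfForm_eq, map_smul, map_smul, smul_comm]

lemma alt_eq (f : (Module.Dual ℝ V)
      [⋀^Fin (Module.finrank ℝ (Module.Dual ℝ V))]→ₗ[ℝ] ExteriorAlgebra ℝ (Module.Dual ℝ V))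
    (v : Fin (Module.finrank ℝ (Module.Dual ℝ V)) → Module.Dual ℝ V) :
    f v = (Module.finBasis ℝ (Module.Dual ℝ V)).det v • f (Module.finBasis ℝ (Module.Dual ℝ V)) := by
  set e := Module.finBasis ℝ (Module.Dual ℝ V) with he
  have key : f = (LinearMap.toSpanSingleton ℝ _ (f e)).compAlternatingMap e.det := by
    refine Module.Basis.ext_alternating e (fun i hi => ?_)
    let σ : Equiv.Perm (Fin (Module.finrank ℝ (Module.Dual ℝ V))) :=
      Equiv.ofBijective i (Finite.injective_iff_bijective.1 hi)
    have h1 : (fun j => e (i j)) = e ∘ σ := rfl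
    rw [h1, f.map_perm, LinearMap.compAlternatingMap_apply, AlternatingMap.map_perm,
      Module.Basis.det_self, LinearMap.toSpanSingleton_apply]
    rw [Units.smul_def, Units.smul_def, Int.smul_one_eq_cast, Int.cast_smul_eq_zsmul]
  conv_lhs => rw [key]
  rw [LinearMap.compAlternatingMap_apply, LinearMap.toSpanSingleton_apply]

lemma map_top (f : Module.Dual ℝ V →ₗ[ℝ] Module.Dual ℝ V)
    (x : ExteriorAlgebra ℝ (Module.Dual ℝ V))
    (hx : x ∈ ⋀[ℝ]^(Module.finrank ℝ (Module.Dual ℝ V)) (Module.Dual ℝ V)) :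
    ExteriorAlgebra.map f x = LinearMap.det f • x := by
  rw [← ExteriorAlgebra.ιMulti_span_fixedDegree] at hx
  induction hx using Submodule.span_induction with
  | mem x h =>
      obtain ⟨v, rfl⟩ := h
      rw [ExteriorAlgebra.map_apply_ιMulti]
      rw [alt_eq (ExteriorAlgebra.ιMulti ℝ _) (f ∘ v), Module.Basis.det_comp,
        alt_eq (ExteriorAlgebra.ιMulti ℝ _) v, smul_smul]
  | zero => simp
  | add x y hx hy ihx ihy => rw [map_add, ihx, ihy, smul_add]
  | smul a x hx ih => rw [map_smul, ih, smul_comm]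

lemma extAux_mem (t : (Module.Dual ℝ V) ⊗[ℝ] (Module.Dual ℝ V)) :
    extAux t ∈ ⋀[ℝ]^2 (Module.Dual ℝ V) := by
  induction t using TensorProduct.induction_on with
  | zero => simp
  | tmul a b =>
      rw [extAux_tmul]
      have hp : (⋀[ℝ]^2 (Module.Dual ℝ V)) = LinearMap.range (ExteriorAlgebra.ι ℝ (M := Module.Dual ℝ V))
          * LinearMap.range (ExteriorAlgebra.ι ℝ (M := Module.Dual ℝ V)) := pow_two _
      rw [hp]
      exact Submodule.mul_mem_mul (LinearMap.mem_range_self _ a) (LinearMap.mem_range_self _ b)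
  | add t1 t2 h1 h2 => rw [map_add]; exact Submodule.add_mem _ h1 h2

lemma extOfForm_pow_mem (B : V →ₗ[ℝ] Module.Dual ℝ V) (n : ℕ) :
    extOfForm B ^ n ∈ ⋀[ℝ]^(2 * n) (Module.Dual ℝ V) := by
  have h1 : extOfForm B ∈ ⋀[ℝ]^2 (Module.Dual ℝ V) := by
    rw [extOfForm_eq]
    exact Submodule.smul_mem _ _ (extAux_mem _)
  have h2 := Submodule.pow_mem_pow _ h1 n
  rw [← pow_mul] at h2
  exact h2

lemma det_one_add (K : V →ₗ[ℝ] V) (n : ℕ) (hdim : Module.finrank ℝ V = 2 * n)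
    (hK2 : K ∘ₗ K = -LinearMap.id) :
    LinearMap.det (LinearMap.id + K) = 2 ^ n := by
  classical
  set m := Module.finrank ℝ V with hm
  set b := Module.finBasis ℝ V with hb
  set A := LinearMap.toMatrix b b K with hA
  have hA2 : A * A = -1 := by
    rw [hA, ← LinearMap.toMatrix_comp b b b K K, hK2]
    simp [LinearMap.toMatrix_id]
  have hdT : LinearMap.det (LinearMap.id + K) = ((1 : Matrix _ _ ℝ) + A).det := by
    rw [← LinearMap.det_toMatrix b, map_add, LinearMap.toMatrix_id]
  have hcard : Fintype.card (Fin m) = m := Fintype.card_fin m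
  -- key product identity
  have hq : ∀ t : ℝ, ((t • (1 : Matrix _ _ ℝ) + A).det) * ((t • (1 : Matrix _ _ ℝ) - A).det)
      = (t ^ 2 + 1) ^ m := by
    intro t
    rw [← Matrix.det_mul]
    have hmul : (t • (1 : Matrix (Fin m) (Fin m) ℝ) + A) * (t • 1 - A)
        = (t ^ 2 + 1) • 1 := by
      have e1 : A * (t • (1 : Matrix (Fin m) (Fin m) ℝ)) = t • A := by
        rw [Matrix.mul_smul, Matrix.mul_one]
      have e2 : (t • (1 : Matrix (Fin m) (Fin m) ℝ)) * A = t • A := by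
        rw [Matrix.smul_mul, Matrix.one_mul]
      have e3 : (t • (1 : Matrix (Fin m) (Fin m) ℝ)) * (t • 1) = (t ^ 2) • 1 := by
        rw [Matrix.smul_mul, Matrix.one_mul, smul_smul, ← pow_two]
      have e4 : (-1 : Matrix (Fin m) (Fin m) ℝ) = (-1:ℝ) • 1 := by simp
      rw [mul_sub, add_mul, add_mul, e1, e2, e3, hA2, e4]
      module
    rw [hmul, Matrix.det_smul, hcard, Matrix.det_one, mul_one]
  have hqne : ∀ t : ℝ, (t • (1 : Matrix _ _ ℝ) + A).det ≠ 0 := by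
    intro t h
    have h2 := hq t
    rw [h, zero_mul] at h2
    have : (0:ℝ) < (t ^ 2 + 1) ^ m := by positivity
    rw [← h2] at this
    exact lt_irrefl _ this
  have hcont : Continuous (fun t : ℝ => (t • (1 : Matrix (Fin m) (Fin m) ℝ) + A).det) := by
    apply Continuous.matrix_det
    exact (continuous_id.smul continuous_const).add continuous_const
  -- find a point where det is positive
  have hrcont : Continuous (fun s : ℝ => ((1 : Matrix (Fin m) (Fin m) ℝ) + s • A).det) := by
    apply Continuous.matrix_det
    exact continuous_const.add (continuous_id.smul continuous_const)
  have hr0 : ((1 : Matrix (Fin m) (Fin m) ℝ) + (0:ℝ) • A).det = 1 := by simp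
  have hev : ∀ᶠ s in nhds (0:ℝ), 0 < ((1 : Matrix (Fin m) (Fin m) ℝ) + s • A).det := by
    have h00 : (0:ℝ) < ((1 : Matrix (Fin m) (Fin m) ℝ) + (0:ℝ) • A).det := by
      rw [hr0]; norm_num
    have := hrcont.continuousAt.eventually (eventually_gt_nhds h00)
    simpa using this
  obtain ⟨ε, hε, hball⟩ := Metric.eventually_nhds_iff.mp hev
  set s := ε / 2 with hs
  have hspos : 0 < s := by positivity
  have hsd : dist s (0:ℝ) < ε := by
    rw [Real.dist_eq, sub_zero, abs_of_pos hspos]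
    linarith
  have hrs : 0 < ((1 : Matrix (Fin m) (Fin m) ℝ) + s • A).det := hball hsd
  set t₀ := s⁻¹ with ht₀
  have ht₀pos : 0 < t₀ := by positivity
  have hqt₀ : (t₀ • (1 : Matrix (Fin m) (Fin m) ℝ) + A).det
      = t₀ ^ m * ((1 : Matrix (Fin m) (Fin m) ℝ) + s • A).det := by
    have : t₀ • ((1 : Matrix (Fin m) (Fin m) ℝ) + s • A) = t₀ • 1 + A := by
      rw [smul_add, smul_smul, inv_mul_cancel₀ (ne_of_gt hspos), one_smul]
    rw [← this, Matrix.det_smul, hcard]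
  have hqt₀pos : 0 < (t₀ • (1 : Matrix (Fin m) (Fin m) ℝ) + A).det := by
    rw [hqt₀]
    exact mul_pos (pow_pos ht₀pos m) hrs
  -- by IVT, det at 1 is positive
  have h1pos : 0 < ((1:ℝ) • (1 : Matrix (Fin m) (Fin m) ℝ) + A).det := by
    rcases lt_trichotomy (((1:ℝ) • (1 : Matrix (Fin m) (Fin m) ℝ) + A).det) 0 with hlt | heq | hgt
    · exfalso
      have hsub := intermediate_value_uIcc (a := (1:ℝ)) (b := t₀)
        (f := fun t => (t • (1 : Matrix (Fin m) (Fin m) ℝ) + A).det) hcont.continuousOn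
      have h0mem : (0:ℝ) ∈ Set.uIcc (((1:ℝ) • (1 : Matrix (Fin m) (Fin m) ℝ) + A).det)
          ((t₀ • (1 : Matrix (Fin m) (Fin m) ℝ) + A).det) := by
        rw [Set.mem_uIcc]
        left
        exact ⟨le_of_lt hlt, le_of_lt hqt₀pos⟩
      obtain ⟨c, _, hc⟩ := hsub h0mem
      exact hqne c hc
    · exact absurd heq (hqne 1)
    · exact hgt
  -- now the algebra
  have hdetA : A.det = 1 := by
    have hAA : A.det * A.det = 1 := by
      rw [← Matrix.det_mul, hA2]
      have : (-1 : Matrix (Fin m) (Fin m) ℝ) = (-1 : ℝ) • 1 := by simp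
      rw [this, Matrix.det_smul, hcard, Matrix.det_one, mul_one, hdim]
      rw [pow_mul]
      norm_num
    -- det(1-A) = det(-A) * det(1+A) = det A * det(1+A)
    have hfac : ((1:ℝ) • (1 : Matrix (Fin m) (Fin m) ℝ) - A) = (-A) * ((1:ℝ) • 1 + A) := by
      rw [mul_add, Matrix.mul_smul, Matrix.mul_one, neg_mul, hA2]
      module
    have hdetneg : (-A).det = A.det := by
      have : (-A) = (-1 : ℝ) • A := by simp
      rw [this, Matrix.det_smul, hcard, hdim, pow_mul]
      norm_num
    have h2 := hq 1
    rw [hfac, Matrix.det_mul, hdetneg] at h2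
    -- h2 : det(1+A) * (det A * det(1+A)) = 2^m
    rcases mul_self_eq_one_iff.mp hAA with h | h
    · exact h
    · exfalso
      rw [h] at h2
      have : ((1:ℝ)^2 + 1) ^ m > 0 := by positivity
      nlinarith [h1pos]
  have hsq : ((1:ℝ) • (1 : Matrix (Fin m) (Fin m) ℝ) + A).det ^ 2 = (2:ℝ) ^ m := by
    have h2 := hq 1
    have hfac : ((1:ℝ) • (1 : Matrix (Fin m) (Fin m) ℝ) - A) = (-A) * ((1:ℝ) • 1 + A) := by
      rw [mul_add, Matrix.mul_smul, Matrix.mul_one, neg_mul, hA2]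
      module
    have hdetneg : (-A).det = A.det := by
      have : (-A) = (-1 : ℝ) • A := by simp
      rw [this, Matrix.det_smul, hcard, hdim, pow_mul]
      norm_num
    rw [hfac, Matrix.det_mul, hdetneg, hdetA, one_mul] at h2
    rw [pow_two]
    rw [h2]
    norm_num
  have h1s : ((1:ℝ) • (1 : Matrix (Fin m) (Fin m) ℝ)) = 1 := one_smul _ _
  rw [hdT, ← h1s]
  have h2m : (2:ℝ) ^ m = ((2:ℝ) ^ n) ^ 2 := by
    rw [hdim, ← pow_mul, mul_comm]
  rw [h2m] at hsq
  nlinarith [h1pos, hsq, pow_pos (by norm_num : (0:ℝ) < 2) n]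

lemma det_dualMap (T : V →ₗ[ℝ] V) : LinearMap.det T.dualMap = LinearMap.det T := by
  classical
  set b := Module.finBasis ℝ V with hb
  rw [← LinearMap.det_toMatrix b T, ← LinearMap.det_toMatrix b.dualBasis T.dualMap,
    LinearMap.dualMap_def, LinearMap.toMatrix_transpose, Matrix.det_transpose]

/-- Let `(V, g, I, J, K)` be a hyper-Kähler vector space of real dimension `2n` (`n ≥ 1`),
i.e. a finite-dimensional real inner product space (the inner product `g` given as a
symmetric, positive definite, hence bijective, linear map `V → V*`) with three
endomorphisms `I, J, K` satisfying the quaternionic relations and which are isometries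
of `g`.  Let `ω_I, ω_J, ω_K` be the associated Kähler forms, regarded as elements of
`⋀² V*`.  Then for every `w ∈ V*` we have `ω_I^{n-1} ∧ (w∘K) = ω_J^{n-1} ∧ w` in
`⋀^{2n-1} V*`, where `w∘K ∈ V*` is the precomposition of `w` with `K`. -/
theorem stmt_8 {V : Type} [AddCommGroup V] [Module ℝ V] [FiniteDimensional ℝ V]
    (n : ℕ) (hn : 1 ≤ n) (hdim : Module.finrank ℝ V = 2 * n)
    (g : V →ₗ[ℝ] Module.Dual ℝ V)
    (hgsymm : ∀ v w : V, g v w = g w v)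
    (hgpos : ∀ v : V, v ≠ 0 → 0 < g v v)
    (hgbij : Function.Bijective g)
    (I J K : V →ₗ[ℝ] V)
    (hI2 : I ∘ₗ I = -LinearMap.id) (hJ2 : J ∘ₗ J = -LinearMap.id)
    (hK2 : K ∘ₗ K = -LinearMap.id) (hIJK : I ∘ₗ (J ∘ₗ K) = -LinearMap.id)
    (hIiso : ∀ v w : V, g (I v) (I w) = g v w)
    (hJiso : ∀ v w : V, g (J v) (J w) = g v w)
    (hKiso : ∀ v w : V, g (K v) (K w) = g v w)
    :
    ∀ w : Module.Dual ℝ V,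
      extOfForm (g ∘ₗ I) ^ (n - 1) * ExteriorAlgebra.ι ℝ (w ∘ₗ K)
        = extOfForm (g ∘ₗ J) ^ (n - 1) * ExteriorAlgebra.ι ℝ w := by
  intro w
  -- pointwise versions of the algebraic hypotheses
  have hI2' : ∀ v, I (I v) = -v := fun v => by
    have := LinearMap.ext_iff.mp hI2 v
    simpa using this
  have hJ2' : ∀ v, J (J v) = -v := fun v => by
    have := LinearMap.ext_iff.mp hJ2 v
    simpa using this
  have hK2' : ∀ v, K (K v) = -v := fun v => by
    have := LinearMap.ext_iff.mp hK2 v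
    simpa using this
  have hIJK' : ∀ v, I (J (K v)) = -v := fun v => by
    have := LinearMap.ext_iff.mp hIJK v
    simpa using this
  -- quaternion relations
  have hJK : ∀ v, J (K v) = I v := fun v => by
    have h1 := hIJK' v
    have h2 := congrArg I h1
    rw [hI2' (J (K v))] at h2
    have := congrArg Neg.neg h2
    simpa using this
  have hKI : ∀ v, K (I v) = J v := fun v => by
    -- J (K (I v)) = I (I v) = -v, apply J
    have h1 : J (K (I v)) = -v := by rw [hJK (I v), hI2' v]
    have h2 := congrArg J h1
    rw [hJ2' (K (I v))] at h2
    have h3 : K (I v) = -J (-v) := by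
      have := congrArg Neg.neg h2
      simpa using this
    rw [map_neg] at h3
    simpa using h3
  have hIK : ∀ v, I (K v) = -J v := fun v => by
    -- K (I (K v)) = J (K v) = I v ; apply K
    have h1 : K (I (K v)) = I v := by rw [hKI (K v)] ; exact hJK v
    have h2 := congrArg K h1
    rw [hK2' (I (K v))] at h2
    -- -(I (K v)) = K (I v) = J v
    rw [hKI v] at h2
    have := congrArg Neg.neg h2
    simpa using this
  have hKJ : ∀ v, K (J v) = -I v := fun v => by
    -- K (I v) = J v  ⇒ apply K : -(I v) = K (J v)
    have h1 := congrArg K (hKI v)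
    rw [hK2' (I v)] at h1
    exact h1.symm
  have hIJ : ∀ v, I (J v) = K v := fun v => by
    -- I (J (-K (K v))) = ...
    have h1 : I (J (K (K v))) = -(K v) := hIJK' (K v)
    rw [hK2' v, map_neg, map_neg] at h1
    simpa using h1
  -- metric relations
  have hgK : ∀ a x : V, g a (K x) = - g (K a) x := fun a x => by
    have h1 : g (K (K a)) (K x) = g (K a) x := hKiso (K a) x
    rw [hK2' a] at h1
    rw [map_neg] at h1
    simp only [LinearMap.neg_apply] at h1
    linarith [h1]
  have hgI : ∀ a x : V, g a (I x) = - g (I a) x := fun a x => by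
    have h1 : g (I (I a)) (I x) = g (I a) x := hIiso (I a) x
    rw [hI2' a, map_neg] at h1
    simp only [LinearMap.neg_apply] at h1
    linarith [h1]
  have hgJ : ∀ a x : V, g a (J x) = - g (J a) x := fun a x => by
    have h1 : g (J (J a)) (J x) = g (J a) x := hJiso (J a) x
    rw [hJ2' a, map_neg] at h1
    simp only [LinearMap.neg_apply] at h1
    linarith [h1]
  -- antisymmetry of the two forms
  have hantiI : ∀ x y : V, (g ∘ₗ I) x y = - ((g ∘ₗ I) y x) := fun x y => by
    simp only [LinearMap.comp_apply]
    rw [hgsymm (I x) y, hgI y x]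
  have hantiJ : ∀ x y : V, (g ∘ₗ J) x y = - ((g ∘ₗ J) y x) := fun x y => by
    simp only [LinearMap.comp_apply]
    rw [hgsymm (J x) y, hgJ y x]
  -- the rotation T = 1 + K
  set T : V →ₗ[ℝ] V := LinearMap.id + K with hT
  have hform : T.dualMap ∘ₗ (g ∘ₗ J) ∘ₗ T = (2:ℝ) • (g ∘ₗ I) := by
    apply LinearMap.ext; intro v
    apply LinearMap.ext; intro x
    have hL : (T.dualMap ∘ₗ (g ∘ₗ J) ∘ₗ T) v x
        = g (J v) x + g (J v) (K x) + g (J (K v)) x + g (J (K v)) (K x) := by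
      simp only [LinearMap.comp_apply, LinearMap.dualMap_apply, hT, LinearMap.add_apply,
        LinearMap.id_apply, map_add]
      ring
    have hR : ((2:ℝ) • (g ∘ₗ I)) v x = 2 * g (I v) x := by
      simp only [LinearMap.smul_apply, LinearMap.comp_apply, smul_eq_mul]
    rw [hL, hR, hJK v, hgK (J v) x, hKJ v, hgK (I v) x, hKI v]
    simp only [map_neg, LinearMap.neg_apply]
    ring
  -- the top powers agree
  have hpow : extOfForm (g ∘ₗ I) ^ n = extOfForm (g ∘ₗ J) ^ n := by
    have hmem : extOfForm (g ∘ₗ J) ^ n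
        ∈ ⋀[ℝ]^(Module.finrank ℝ (Module.Dual ℝ V)) (Module.Dual ℝ V) := by
      have := extOfForm_pow_mem (g ∘ₗ J) n
      rwa [Subspace.dual_finrank_eq, hdim]
    have h1 := map_top T.dualMap _ hmem
    rw [map_pow, map_extOfForm, hform, det_dualMap] at h1
    have h2 : extOfForm ((2:ℝ) • (g ∘ₗ I)) = (2:ℝ) • extOfForm (g ∘ₗ I) := extOfForm_smul _ _
    rw [h2, smul_pow] at h1
    have h3 : LinearMap.det T = 2 ^ n := det_one_add K n hdim hK2
    rw [h3] at h1
    have h4 : ((2:ℝ) ^ n) ≠ 0 := by positivity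
    have h5 := congrArg (fun z => ((2:ℝ) ^ n)⁻¹ • z) h1
    simpa [smul_smul, inv_mul_cancel₀ h4] using h5
  -- the contraction vector
  set u : V := (LinearEquiv.ofBijective g hgbij).symm w with hu
  have hgu : g u = w := (LinearEquiv.ofBijective g hgbij).apply_symm_apply w
  set v : V := -(J u) with hv
  have hBIv : (g ∘ₗ I) v = w ∘ₗ K := by
    apply LinearMap.ext; intro x
    simp only [LinearMap.comp_apply, hv, map_neg, LinearMap.neg_apply]
    rw [hIJ u]
    -- -(g (K u)) x = w (K x)
    have h1 : g u (K x) = - g (K u) x := hgK u x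
    rw [← hgu]
    linarith [h1]
  have hBJv : (g ∘ₗ J) v = w := by
    apply LinearMap.ext; intro x
    simp only [LinearMap.comp_apply, hv, map_neg, LinearMap.neg_apply]
    rw [hJ2' u, map_neg, ← hgu]
    simp
  -- apply the contraction
  have h1 := ctr_extOfForm_pow v (g ∘ₗ I) hantiI (n - 1)
  have h2 := ctr_extOfForm_pow v (g ∘ₗ J) hantiJ (n - 1)
  have hsub : n - 1 + 1 = n := Nat.succ_pred_eq_of_pos hn
  rw [hsub, hBIv] at h1
  rw [hsub, hBJv] at h2
  have h3 : (n:ℕ) • (extOfForm (g ∘ₗ I) ^ (n-1) * ExteriorAlgebra.ι ℝ (w ∘ₗ K))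
      = (n:ℕ) • (extOfForm (g ∘ₗ J) ^ (n-1) * ExteriorAlgebra.ι ℝ w) := by
    rw [← h1, ← h2, hpow]
  rw [← Nat.cast_smul_eq_nsmul ℝ, ← Nat.cast_smul_eq_nsmul ℝ] at h3
  have hn0 : ((n:ℝ)) ≠ 0 := Nat.cast_ne_zero.mpr (by omega)
  have h6 := congrArg (fun z => ((n:ℝ))⁻¹ • z) h3
  simpa [smul_smul, inv_mul_cancel₀ hn0] using h6
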